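/- Let D be an invariant divergence on 𝒫(𝒵) with constant η > 0, let P ∈ 𝒫(𝒵), let ε ∈ (0,1), and let X^n, Y^n be independent i.i.d. sequences distributed according to P. Suppose there exist M_0 > 0, N_0 ∈ ℕ, and a positive sequence {δ_n} with δ_n → 0 such that |P^n×P^n((n/2)·D(T_{X^n}‖T_{Y^n}) ≥ c) − Q_{χ²_{k−1}}(c/η)| ≤ M_0·δ_n for all c > 0 and all n ≥ N_0. Define r_{n,ε} = inf{ r > 0 : P^n×P^n(D(T_{X^n}‖T_{Y^n}) ≥ r) ≤ ε }. Then r_{n,ε} = (2η/n)·Q⁻¹_{χ²_{k−1}}(ε) + O(δ_n/n) as n → ∞. -/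

import Mathlib

open scoped BigOperators
open Filter MeasureTheory Matrix

namespace TwoSampleTest

variable {m : ℕ}

/-- All probability distributions on the alphabet `Fin (m+1)` (the set `𝒫̄(𝒵)`). -/
def IsDist (P : Fin (m+1) → ℝ) : Prop :=
  (∀ i, 0 ≤ P i) ∧ ∑ i, P i = 1

/-- Strictly positive probability distributions on `Fin (m+1)` (the set `𝒫(𝒵)`). -/
def IsPosDist (P : Fin (m+1) → ℝ) : Prop :=
  (∀ i, 0 < P i) ∧ ∑ i, P i = 1

/-- The open coordinate domain `Ξ ⊆ ℝ^m`. -/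
def Xi (m : ℕ) : Set (Fin m → ℝ) :=
  {x | (∀ i, 0 < x i) ∧ ∑ i, x i < 1}

/-- Coordinate vector (first `m` components) of a distribution on `Fin (m+1)`. -/
def coordOf (P : Fin (m+1) → ℝ) : Fin m → ℝ := fun i => P i.castSucc

/-- Euclidean norm on `ℝ^m`. -/
noncomputable def l2norm (v : Fin m → ℝ) : ℝ := Real.sqrt (∑ i, (v i)^2)

/-- ℓ₁ distance between two distributions. -/
noncomputable def l1dist (P Q : Fin (m+1) → ℝ) : ℝ := ∑ i, |P i - Q i|

/-- A divergence on `𝒫(𝒵)`, viewed through coordinates in `Ξ`. -/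
structure Divergence (m : ℕ) where
  f : (Fin m → ℝ) → (Fin m → ℝ) → ℝ
  smooth : ContDiffOn ℝ (⊤ : ℕ∞)
    (fun p : (Fin m → ℝ) × (Fin m → ℝ) => f p.1 p.2) ((Xi m) ×ˢ (Xi m))
  nonneg : ∀ s ∈ Xi m, ∀ r ∈ Xi m, 0 ≤ f s r
  eq_zero_iff : ∀ s ∈ Xi m, ∀ r ∈ Xi m, (f s r = 0 ↔ s = r)
  taylor : ∀ r ∈ Xi m, ∃ G : Matrix (Fin m) (Fin m) ℝ, G.PosDef ∧
      ∃ C > (0:ℝ), ∃ δ > (0:ℝ), ∀ e : Fin m → ℝ, l2norm e < δ → r + e ∈ Xi m →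
        |f (r + e) r - (1/2) * ∑ i, ∑ j, G i j * e i * e j| ≤ C * (l2norm e)^3
  boundary : ∀ r ∈ Xi m, ∀ S : ℕ → (Fin m → ℝ), (∀ n, S n ∈ Xi m) →
      ∀ L ∈ frontier (Xi m), Filter.Tendsto S Filter.atTop (nhds L) →
        0 < Filter.liminf (fun n => f (S n) r) Filter.atTop

/-- The divergence evaluated at two distributions. -/
noncomputable def Dapp (D : Divergence m) (T R : Fin (m+1) → ℝ) : ℝ :=
  D.f (coordOf T) (coordOf R)

/-- The matrix `A_{D,P}` associated with a divergence `D` at coordinate point `p`: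
`a_{ij} = ½ ∂²D(S‖p)/∂S_i∂S_j` at `S = p`. -/
noncomputable def Amat (D : Divergence m) (p : Fin m → ℝ) : Matrix (Fin m) (Fin m) ℝ :=
  Matrix.of fun i j =>
    (1/2) * fderiv ℝ (fun s => fderiv ℝ (fun s' => D.f s' p) s (Pi.single j 1)) p (Pi.single i 1)

/-- The matrix `Σ_P`. -/
noncomputable def SigmaMat (P : Fin (m+1) → ℝ) : Matrix (Fin m) (Fin m) ℝ :=
  Matrix.of fun i j =>
    if i = j then 1 / P i.castSucc + 1 / P (Fin.last m) else 1 / P (Fin.last m)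

/-- `D` is an invariant divergence with constant `η`. -/
def IsInvariant (D : Divergence m) (η : ℝ) : Prop :=
  ∀ P : Fin (m+1) → ℝ, IsPosDist P → Amat D (coordOf P) = η • SigmaMat P

/-- Quadratic form `vᵀ M v`. -/
noncomputable def quadForm (M : Matrix (Fin m) (Fin m) ℝ) (v : Fin m → ℝ) : ℝ :=
  v ⬝ᵥ M.mulVec v

/-- Type (empirical distribution) of a sequence. -/
noncomputable def typeOf {n : ℕ} (x : Fin n → Fin (m+1)) : Fin (m+1) → ℝ :=
  fun i => ((Finset.univ.filter (fun t => x t = i)).card : ℝ) / n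

/-- Probability of a sequence under i.i.d. sampling from `P`. -/
def probSeq (P : Fin (m+1) → ℝ) {n : ℕ} (x : Fin n → Fin (m+1)) : ℝ := ∏ t, P (x t)

/-- Type-I error of the divergence test with test statistic `Dfun` and threshold `r`,
under common distribution `P`: the probability that `Dfun(T_{X^n}‖T_{Y^n}) ≥ r`. -/
noncomputable def alpha (Dfun : (Fin (m+1) → ℝ) → (Fin (m+1) → ℝ) → ℝ) (r : ℝ)
    (P : Fin (m+1) → ℝ) (n : ℕ) : ℝ :=
  ∑ x : Fin n → Fin (m+1), ∑ y : Fin n → Fin (m+1),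
    if r ≤ Dfun (typeOf x) (typeOf y) then probSeq P x * probSeq P y else 0

/-- Type-II error: the probability under `P₁ × P₂` that `Dfun(T_{X^n}‖T_{Y^n}) < r`. -/
noncomputable def beta (Dfun : (Fin (m+1) → ℝ) → (Fin (m+1) → ℝ) → ℝ) (r : ℝ)
    (P₁ P₂ : Fin (m+1) → ℝ) (n : ℕ) : ℝ :=
  ∑ x : Fin n → Fin (m+1), ∑ y : Fin n → Fin (m+1),
    if Dfun (typeOf x) (typeOf y) < r then probSeq P₁ x * probSeq P₂ y else 0

/-- Kullback-Leibler divergence (with the convention `0 · ln 0 = 0`). -/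
noncomputable def KL (P Q : Fin (m+1) → ℝ) : ℝ := ∑ i, P i * Real.log (P i / Q i)

/-- KL divergence variance. -/
noncomputable def VKL (P Q : Fin (m+1) → ℝ) : ℝ :=
  ∑ i, P i * (Real.log (P i / Q i) - KL P Q)^2

/-- Bhattacharyya distance. -/
noncomputable def DB (P Q : Fin (m+1) → ℝ) : ℝ :=
  - Real.log (∑ i, Real.sqrt (P i * Q i))

/-- The normalized geometric mean `P*` of two distributions. -/
noncomputable def Pstar (P₁ P₂ : Fin (m+1) → ℝ) : Fin (m+1) → ℝ :=
  fun i => Real.sqrt (P₁ i * P₂ i) / ∑ j, Real.sqrt (P₁ j * P₂ j)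

/-- Jensen–Shannon divergence. -/
noncomputable def DJS (T R : Fin (m+1) → ℝ) : ℝ :=
  (1/2) * KL T (fun i => (T i + R i)/2) + (1/2) * KL R (fun i => (T i + R i)/2)

/-- Law of `m` i.i.d. standard Gaussians. -/
noncomputable def stdGaussianPi (m : ℕ) : Measure (Fin m → ℝ) :=
  Measure.pi (fun _ => ProbabilityTheory.gaussianReal 0 1)

/-- Tail probability of the generalized chi-square distribution with weights `lam`:
`P(∑ lam i * U i ^ 2 ≥ c)` for i.i.d. standard normal `U`. -/
noncomputable def genChiSqTail (m : ℕ) (lam : Fin m → ℝ) (c : ℝ) : ℝ :=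
  (stdGaussianPi m {u | c ≤ ∑ i, lam i * (u i)^2}).toReal

/-- Tail probability of the chi-square distribution with `m` degrees of freedom. -/
noncomputable def chiSqTail (m : ℕ) (c : ℝ) : ℝ := genChiSqTail m (fun _ => 1) c

/-- Inverse of the chi-square tail probability. -/
noncomputable def chiSqTailInv (m : ℕ) (ε : ℝ) : ℝ :=
  sInf {c : ℝ | 0 < c ∧ chiSqTail m c ≤ ε}

/-- The linear functional `ℓ_P(T,R)`. -/
noncomputable def ellP (P P₁ P₂ T R : Fin (m+1) → ℝ) : ℝ :=
  ∑ i, (T i - P i) * Real.log (P i / P₁ i) + ∑ i, (R i - P i) * Real.log (P i / P₂ i)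

/-- Membership of `(T,R)` in the set `A_{Σ_P}(r)`. -/
noncomputable def memASigma (P T R : Fin (m+1) → ℝ) (r : ℝ) : Prop :=
  IsPosDist T ∧ IsPosDist R ∧
    quadForm (SigmaMat P) (fun i => coordOf T i - coordOf P i)
      + quadForm (SigmaMat P) (fun i => coordOf R i - coordOf P i) ≤ r

/-- The vector with components `ln(P_i/Q_i) − ln(P_k/Q_k)`, `i = 1,…,k−1`. -/
noncomputable def cvec (P Q : Fin (m+1) → ℝ) : Fin m → ℝ :=
  fun i => Real.log (P i.castSucc / Q i.castSucc) - Real.log (P (Fin.last m) / Q (Fin.last m))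

/-- A type distribution with denominator `n`. -/
def IsTypeDist (n : ℕ) (P : Fin (m+1) → ℝ) : Prop :=
  IsDist P ∧ ∀ i, ∃ a : ℕ, P i = (a : ℝ) / n

/-- The best (largest) type-II error exponent `−(1/n) ln β_n` over all thresholds `r > 0`
whose type-I error is at most `ε` for every common distribution `P ∈ 𝒫(𝒵)`. -/
noncomputable def supExp (Dfun : (Fin (m+1) → ℝ) → (Fin (m+1) → ℝ) → ℝ)
    (P₁ P₂ : Fin (m+1) → ℝ) (ε : ℝ) (n : ℕ) : ℝ :=
  sSup { v : ℝ | ∃ r : ℝ, 0 < r ∧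
    (∀ P : Fin (m+1) → ℝ, IsPosDist P → alpha Dfun r P n ≤ ε) ∧
    v = -(Real.log (beta Dfun r P₁ P₂ n)) / n }


section Aux
open ProbabilityTheory Real

/-- Sum of squares of coordinates. -/
def qf {m : ℕ} (u : Fin m → ℝ) : ℝ := ∑ i, (u i)^2

lemma qf_nonneg {m : ℕ} (u : Fin m → ℝ) : 0 ≤ qf u :=
  Finset.sum_nonneg fun _ _ => sq_nonneg _

lemma measurable_qf {m : ℕ} : Measurable (qf (m := m)) := by
  unfold qf; exact Finset.measurable_sum _ fun i _ => (measurable_pi_apply i).pow_const 2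

noncomputable def gmeas : Measure ℝ := ProbabilityTheory.gaussianReal 0 1

instance gmeas_prob : IsProbabilityMeasure gmeas := by unfold gmeas; infer_instance

instance gpi_prob (m : ℕ) : IsProbabilityMeasure (stdGaussianPi m) := by
  unfold stdGaussianPi; infer_instance

lemma gpdf_mono {x M : ℝ} (h : |x| ≤ M) :
    gaussianPDFReal 0 1 M ≤ gaussianPDFReal 0 1 x := by
  unfold gaussianPDFReal
  apply mul_le_mul_of_nonneg_left _ (by positivity)
  apply Real.exp_le_exp.2
  have : x^2 ≤ M^2 := sq_le_sq' (by cases abs_le.1 h; linarith) (abs_le.1 h).2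
  push_cast
  nlinarith

lemma gmeas_Ico_lb {x₁ x₂ d : ℝ} (hd : 0 ≤ d)
    (h : ∀ x ∈ Set.Ico x₁ x₂, d ≤ gaussianPDFReal 0 1 x) :
    ENNReal.ofReal (d * (x₂ - x₁)) ≤ gmeas (Set.Ico x₁ x₂) := by
  rcases le_or_gt x₂ x₁ with hle | hlt
  · have : d * (x₂ - x₁) ≤ 0 := mul_nonpos_of_nonneg_of_nonpos hd (by linarith)
    simp [ENNReal.ofReal_eq_zero.2 this]
  rw [show gmeas = gaussianReal 0 1 from rfl, gaussianReal_apply 0 (by norm_num) _]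
  calc ENNReal.ofReal (d * (x₂ - x₁)) = ENNReal.ofReal d * volume (Set.Ico x₁ x₂) := by
        rw [Real.volume_Ico, ← ENNReal.ofReal_mul hd]
    _ = ∫⁻ _ in Set.Ico x₁ x₂, ENNReal.ofReal d := by rw [setLIntegral_const, mul_comm]
    _ ≤ ∫⁻ x in Set.Ico x₁ x₂, gaussianPDF 0 1 x := by
        apply setLIntegral_mono (measurable_gaussianPDF 0 1)
        intro x hx
        exact ENNReal.ofReal_le_ofReal (h x hx)

lemma ball_pos {M : ℕ} {a : ℝ} (ha : 0 < a) :
    0 < stdGaussianPi M {y | qf y < a} := by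
  set r := Real.sqrt (a / (M+1)) with hr
  have hrpos : 0 < r := Real.sqrt_pos.2 (by positivity)
  have hbox : (Set.univ.pi fun _ : Fin M => Set.Ioo (-r) r) ⊆ {y | qf y < a} := by
    intro y hy
    have hy' : ∀ j, (y j)^2 ≤ a / (M+1) := by
      intro j
      have := hy j (Set.mem_univ j)
      have h1 : |y j| ≤ r := abs_le.2 ⟨this.1.le, this.2.le⟩
      calc (y j)^2 = |y j|^2 := (sq_abs _).symm
        _ ≤ r^2 := by nlinarith [abs_nonneg (y j)]
        _ = a / (M+1) := Real.sq_sqrt (by positivity)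
    have : qf y ≤ M * (a / (M+1)) := by
      unfold qf
      calc ∑ j, (y j)^2 ≤ ∑ _j : Fin M, a / (M+1) := Finset.sum_le_sum fun j _ => hy' j
        _ = M * (a / (M+1)) := by simp [Finset.sum_const, Finset.card_univ, mul_comm]
    refine lt_of_le_of_lt this ?_
    have hlt : (M : ℝ) / (M+1) < 1 := by
      rw [div_lt_one (by positivity)]; linarith
    calc (M:ℝ) * (a / (M+1)) = (M / (M+1)) * a := by ring
      _ < 1 * a := by apply mul_lt_mul_of_pos_right hlt ha
      _ = a := one_mul a
  refine lt_of_lt_of_le ?_ (measure_mono hbox)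
  rw [show stdGaussianPi M = Measure.pi (fun _ => gaussianReal 0 1) from rfl,
    Measure.pi_pi]
  apply CanonicallyOrderedAdd.prod_pos.2
  intro i _
  have hsub : Set.Ico (0:ℝ) r ⊆ Set.Ioo (-r) r := by
    intro x hx; exact ⟨lt_of_lt_of_le (by linarith) hx.1, hx.2⟩
  have := gmeas_Ico_lb (x₁ := 0) (x₂ := r) (d := gaussianPDFReal 0 1 r)
    (gaussianPDFReal_pos 0 1 r (by norm_num)).le
    (fun x hx => gpdf_mono (by rw [abs_of_nonneg hx.1]; exact hx.2.le))
  refine lt_of_lt_of_le (lt_of_lt_of_le ?_ this) (measure_mono hsub)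
  rw [ENNReal.ofReal_pos]
  have := gaussianPDFReal_pos 0 1 r (by norm_num)
  nlinarith

lemma shell_lb (M : ℕ) (a b : ℝ) (ha : 0 < a) (hab : a ≤ b) :
    ∃ κ > (0:ℝ), ∀ s t : ℝ, a ≤ s → 0 ≤ t → s + t ≤ b →
      ENNReal.ofReal (κ * t) ≤ stdGaussianPi (M+1) {u | s ≤ qf u ∧ qf u < s + t} := by
  have hb0 : 0 < b := lt_of_lt_of_le ha hab
  have hsb : 0 < Real.sqrt b := Real.sqrt_pos.2 hb0
  set d := gaussianPDFReal 0 1 (Real.sqrt b) with hd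
  have hdpos : 0 < d := gaussianPDFReal_pos 0 1 _ (by norm_num)
  set κ₂ := d / (2 * Real.sqrt b) with hκ₂
  have hκ₂pos : 0 < κ₂ := by positivity
  set B := stdGaussianPi M {y | qf y < a} with hB
  have hBpos : 0 < B := ball_pos ha
  have hBne : B ≠ ⊤ := measure_ne_top _ _
  refine ⟨κ₂ * B.toReal, mul_pos hκ₂pos (ENNReal.toReal_pos hBpos.ne' hBne), ?_⟩
  intro s t hs ht hstb
  set e := MeasurableEquiv.piFinSuccAbove (fun _ : Fin (M+1) => ℝ) 0 with he
  have mp : MeasurePreserving e (stdGaussianPi (M+1)) (gmeas.prod (stdGaussianPi M)) :=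
    measurePreserving_piFinSuccAbove (fun _ => gaussianReal 0 1) 0
  have mp2 : MeasurePreserving e.symm (gmeas.prod (stdGaussianPi M)) (stdGaussianPi (M+1)) :=
    mp.symm e
  have hshell_meas : MeasurableSet {u : Fin (M+1) → ℝ | s ≤ qf u ∧ qf u < s + t} :=
    (measurableSet_le measurable_const measurable_qf).inter
      (measurableSet_lt measurable_qf measurable_const)
  have hpre : stdGaussianPi (M+1) {u | s ≤ qf u ∧ qf u < s + t}
      = (gmeas.prod (stdGaussianPi M)) (e.symm ⁻¹' {u | s ≤ qf u ∧ qf u < s + t}) :=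
    (mp2.measure_preimage hshell_meas.nullMeasurableSet).symm
  have hpre_eq : ∀ p : ℝ × (Fin M → ℝ),
      e.symm p ∈ {u : Fin (M+1) → ℝ | s ≤ qf u ∧ qf u < s + t}
      ↔ (s ≤ p.1^2 + qf p.2 ∧ p.1^2 + qf p.2 < s + t) := by
    intro p
    have : qf (e.symm p) = p.1^2 + qf p.2 := by
      show qf ((Fin.insertNthEquiv (fun _ => ℝ) 0) p) = _
      simp only [Fin.insertNthEquiv_zero]
      unfold qf
      rw [Fin.sum_univ_succ]
      simp [Fin.cons_succ]
    simp [Set.mem_setOf_eq, this]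
  set E : Set (ℝ × (Fin M → ℝ)) :=
    {p | qf p.2 < a ∧ p.1 ∈ Set.Ico (Real.sqrt (s - qf p.2)) (Real.sqrt (s + t - qf p.2))}
    with hE
  have hEsub : E ⊆ e.symm ⁻¹' {u | s ≤ qf u ∧ qf u < s + t} := by
    rintro ⟨x, y⟩ ⟨hy, hx1, hx2⟩
    rw [Set.mem_preimage, hpre_eq]
    have hσ : 0 ≤ qf y := qf_nonneg y
    have hσs : qf y ≤ s := le_trans hy.le hs
    have hx0 : 0 ≤ x := le_trans (Real.sqrt_nonneg _) hx1
    constructor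
    · have : Real.sqrt (s - qf y) ^ 2 = s - qf y := Real.sq_sqrt (by linarith)
      nlinarith [Real.sqrt_nonneg (s - qf y)]
    · have : x^2 < s + t - qf y := (Real.lt_sqrt hx0).1 hx2
      linarith
  have hEmeas : MeasurableSet E := by
    apply MeasurableSet.inter
    · exact measurableSet_lt (measurable_qf.comp measurable_snd) measurable_const
    apply MeasurableSet.inter
    · exact measurableSet_le
        (Real.continuous_sqrt.measurable.comp
          ((measurable_const.sub (measurable_qf.comp measurable_snd))))
        measurable_fst
    · exact measurableSet_lt measurable_fst
        (Real.continuous_sqrt.measurable.comp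
          ((measurable_const.sub (measurable_qf.comp measurable_snd))))
  have hslice : ∀ y : Fin M → ℝ, qf y < a →
      ENNReal.ofReal (κ₂ * t) ≤ gmeas ((fun x => (x, y)) ⁻¹' E) := by
    intro y hy
    have hσ : 0 ≤ qf y := qf_nonneg y
    have hsliceeq : ((fun x => (x, y)) ⁻¹' E)
        = Set.Ico (Real.sqrt (s - qf y)) (Real.sqrt (s + t - qf y)) := by
      ext x; simp [hE, Set.mem_preimage, hy]
    rw [hsliceeq]
    have hub : Real.sqrt (s + t - qf y) ≤ Real.sqrt b :=
      Real.sqrt_le_sqrt (by linarith)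
    have hlb : ∀ x ∈ Set.Ico (Real.sqrt (s - qf y)) (Real.sqrt (s + t - qf y)),
        d ≤ gaussianPDFReal 0 1 x := by
      intro x hx
      apply gpdf_mono
      rw [abs_of_nonneg (le_trans (Real.sqrt_nonneg _) hx.1)]
      exact le_trans hx.2.le hub
    refine le_trans ?_ (gmeas_Ico_lb hdpos.le hlb)
    apply ENNReal.ofReal_le_ofReal
    have hlen : t / (2 * Real.sqrt b) ≤ Real.sqrt (s + t - qf y) - Real.sqrt (s - qf y) := by
      set A := s - qf y with hA
      have hA0 : 0 ≤ A := by simp [hA]; linarith [hy.le.trans hs]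
      have h1 : Real.sqrt (s + t - qf y) ^ 2 = A + t := by
        rw [show s + t - qf y = A + t by ring]; exact Real.sq_sqrt (by linarith)
      have h2 : Real.sqrt A ^ 2 = A := Real.sq_sqrt hA0
      have h3 : Real.sqrt A ≤ Real.sqrt b := Real.sqrt_le_sqrt (by linarith)
      have h4 : Real.sqrt (s + t - qf y) ≤ Real.sqrt b := hub
      have h5 : 0 ≤ Real.sqrt A := Real.sqrt_nonneg _
      have h6 : 0 ≤ Real.sqrt (s + t - qf y) := Real.sqrt_nonneg _
      have h7 : Real.sqrt A ≤ Real.sqrt (s + t - qf y) := by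
        apply Real.sqrt_le_sqrt; simp [hA]; linarith
      rw [div_le_iff₀ (by positivity)]
      nlinarith
    calc κ₂ * t = d * (t / (2 * Real.sqrt b)) := by rw [hκ₂]; ring
      _ ≤ d * (Real.sqrt (s + t - qf y) - Real.sqrt (s - qf y)) :=
          mul_le_mul_of_nonneg_left hlen hdpos.le
  rw [hpre]
  refine le_trans ?_ (measure_mono hEsub)
  rw [Measure.prod_apply_symm hEmeas]
  have hpoint : ∀ y, ({y' | qf y' < a} : Set (Fin M → ℝ)).indicator
      (fun _ => ENNReal.ofReal (κ₂ * t)) y ≤ gmeas ((fun x => (x, y)) ⁻¹' E) := by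
    intro y
    by_cases hy : y ∈ {y' : Fin M → ℝ | qf y' < a}
    · rw [Set.indicator_of_mem hy]; exact hslice y hy
    · rw [Set.indicator_of_notMem hy]; exact zero_le
  calc ENNReal.ofReal (κ₂ * B.toReal * t)
      = ENNReal.ofReal (κ₂ * t) * B := by
        rw [show κ₂ * B.toReal * t = (κ₂ * t) * B.toReal by ring,
          ENNReal.ofReal_mul (by positivity), ENNReal.ofReal_toReal hBne]
    _ = ∫⁻ y, ({y' | qf y' < a} : Set (Fin M → ℝ)).indicator
          (fun _ => ENNReal.ofReal (κ₂ * t)) y ∂(stdGaussianPi M) := by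
        rw [lintegral_indicator (measurableSet_lt measurable_qf measurable_const),
          setLIntegral_const]
    _ ≤ ∫⁻ y, gmeas ((fun x => (x, y)) ⁻¹' E) ∂(stdGaussianPi M) := lintegral_mono hpoint

lemma chiSqTail_eq (m : ℕ) (c : ℝ) :
    chiSqTail m c = ((stdGaussianPi m) {u | c ≤ qf u}).toReal := by
  unfold chiSqTail genChiSqTail qf
  simp only [one_mul]

lemma chiSqTail_anti (m : ℕ) {c c' : ℝ} (h : c ≤ c') : chiSqTail m c' ≤ chiSqTail m c := by
  rw [chiSqTail_eq, chiSqTail_eq]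
  exact ENNReal.toReal_mono (measure_ne_top _ _)
    (measure_mono fun u hu => le_trans h hu)

lemma chiSqTail_sub_eq {m : ℕ} {c c' : ℝ} (h : c ≤ c') :
    chiSqTail m c - chiSqTail m c'
      = ((stdGaussianPi m) {u | c ≤ qf u ∧ qf u < c'}).toReal := by
  have hU : {u : Fin m → ℝ | c ≤ qf u}
      = {u | c ≤ qf u ∧ qf u < c'} ∪ {u | c' ≤ qf u} := by
    ext u
    simp only [Set.mem_setOf_eq, Set.mem_union]
    constructor
    · intro h1
      by_cases h2 : c' ≤ qf u
      · exact Or.inr h2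
      · exact Or.inl ⟨h1, not_le.1 h2⟩
    · rintro (⟨h1, _⟩ | h2)
      · exact h1
      · exact le_trans h h2
  have hdisj : Disjoint {u : Fin m → ℝ | c ≤ qf u ∧ qf u < c'} {u | c' ≤ qf u} := by
    rw [Set.disjoint_left]
    rintro u ⟨_, h2⟩ h3
    exact absurd h3 (not_le.2 h2)
  rw [chiSqTail_eq, chiSqTail_eq, hU,
    measure_union hdisj (measurableSet_le measurable_const measurable_qf),
    ENNReal.toReal_add (measure_ne_top _ _) (measure_ne_top _ _)]
  ring

lemma shell_real (M : ℕ) (a b : ℝ) (ha : 0 < a) (hab : a ≤ b) :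
    ∃ κ > (0:ℝ), ∀ s t : ℝ, a ≤ s → 0 ≤ t → s + t ≤ b →
      κ * t ≤ chiSqTail (M+1) s - chiSqTail (M+1) (s+t) := by
  obtain ⟨κ, hκ, h⟩ := shell_lb M a b ha hab
  refine ⟨κ, hκ, fun s t hs ht hb' => ?_⟩
  rw [chiSqTail_sub_eq (le_add_of_nonneg_right ht)]
  exact (ENNReal.ofReal_le_iff_le_toReal (measure_ne_top _ _)).1 (h s t hs ht hb')

lemma exists_tail_le (m : ℕ) {ε : ℝ} (hε : 0 < ε) : ∃ c : ℝ, 0 < c ∧ chiSqTail m c ≤ ε := by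
  set A : ℕ → Set (Fin m → ℝ) := fun n => {u | (n:ℝ) + 1 ≤ qf u} with hA
  have hmeas : ∀ n, NullMeasurableSet (A n) (stdGaussianPi m) :=
    fun n => (measurableSet_le measurable_const measurable_qf).nullMeasurableSet
  have hanti : Antitone A := by
    intro n n' hnn' u hu
    simp only [hA, Set.mem_setOf_eq] at *
    have : (n:ℝ) ≤ (n':ℝ) := Nat.cast_le.2 hnn'
    linarith
  have hint : ⋂ n, A n = ∅ := by
    ext u
    simp only [Set.mem_iInter, Set.mem_empty_iff_false, iff_false, not_forall, hA,
      Set.mem_setOf_eq, not_le]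
    obtain ⟨n, hn⟩ := exists_nat_gt (qf u)
    exact ⟨n, by linarith⟩
  have htend := tendsto_measure_iInter_atTop hmeas hanti ⟨0, measure_ne_top _ _⟩
  rw [hint, measure_empty] at htend
  have hev : ∀ᶠ n in Filter.atTop, (stdGaussianPi m) (A n) < ENNReal.ofReal ε :=
    htend.eventually (IsOpen.mem_nhds isOpen_Iio (Set.mem_Iio.2 (ENNReal.ofReal_pos.2 hε)))
  obtain ⟨n, hn⟩ := hev.exists
  refine ⟨(n:ℝ) + 1, by positivity, ?_⟩
  rw [chiSqTail_eq]
  exact ENNReal.toReal_le_of_le_ofReal hε.le hn.le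

lemma exists_head_gt (M : ℕ) {ε : ℝ} (hε : ε < 1) :
    ∃ c₀ : ℝ, 0 < c₀ ∧ ε < chiSqTail (M+1) c₀ := by
  set ε' := (1 + ε)/2 with hε'
  have hε'1 : ε' < 1 := by rw [hε']; linarith
  have hεε' : ε < ε' := by rw [hε']; linarith
  set B : ℕ → Set (Fin (M+1) → ℝ) := fun n => {u | qf u < 1/((n:ℝ)+1)} with hB
  have hmeas : ∀ n, NullMeasurableSet (B n) (stdGaussianPi (M+1)) :=
    fun n => (measurableSet_lt measurable_qf measurable_const).nullMeasurableSet
  have hanti : Antitone B := by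
    intro n n' hnn' u hu
    simp only [hB, Set.mem_setOf_eq] at *
    have h1 : (n:ℝ) ≤ (n':ℝ) := Nat.cast_le.2 hnn'
    have : 1/((n':ℝ)+1) ≤ 1/((n:ℝ)+1) :=
      one_div_le_one_div_of_le (by positivity) (by linarith)
    linarith
  have hint : ⋂ n, B n = {(0 : Fin (M+1) → ℝ)} := by
    ext u
    simp only [Set.mem_iInter, hB, Set.mem_setOf_eq, Set.mem_singleton_iff]
    constructor
    · intro h
      by_contra hu
      have hq : 0 < qf u := by
        rcases lt_or_eq_of_le (qf_nonneg u) with h' | h'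
        · exact h'
        · exfalso
          apply hu
          funext i
          have := (Finset.sum_eq_zero_iff_of_nonneg
            (fun j _ => sq_nonneg (u j))).1 h'.symm i (Finset.mem_univ i)
          exact pow_eq_zero_iff (by norm_num) |>.1 this
      obtain ⟨n, hn⟩ := exists_nat_one_div_lt hq
      exact absurd (h n) (not_lt.2 hn.le)
    · intro h n
      rw [h]
      have : qf (0 : Fin (M+1) → ℝ) = 0 := by unfold qf; simp
      rw [this]
      positivity
  have hzero : (stdGaussianPi (M+1)) {(0 : Fin (M+1) → ℝ)} = 0 := by
    have hsingle : ({(0 : Fin (M+1) → ℝ)} : Set (Fin (M+1) → ℝ))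
        = Set.univ.pi fun _ => ({0} : Set ℝ) := by
      ext u
      simp [Set.mem_pi, funext_iff]
    rw [hsingle, show stdGaussianPi (M+1) = Measure.pi (fun _ => gaussianReal 0 1) from rfl,
      Measure.pi_pi]
    have : gaussianReal 0 1 ({0} : Set ℝ) = 0 := by
      rw [gaussianReal_apply 0 (by norm_num) _]
      exact setLIntegral_measure_zero _ _ Real.volume_singleton
    rw [this]
    simp
  have htend := tendsto_measure_iInter_atTop hmeas hanti ⟨0, measure_ne_top _ _⟩
  rw [hint, hzero] at htend
  have hev : ∀ᶠ n in Filter.atTop, (stdGaussianPi (M+1)) (B n) < ENNReal.ofReal (1 - ε') :=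
    htend.eventually (IsOpen.mem_nhds isOpen_Iio (Set.mem_Iio.2 (ENNReal.ofReal_pos.2 (by linarith))))
  obtain ⟨n, hn⟩ := hev.exists
  refine ⟨1/((n:ℝ)+1), by positivity, lt_of_lt_of_le hεε' ?_⟩
  rw [chiSqTail_eq]
  have hcompl : {u : Fin (M+1) → ℝ | 1/((n:ℝ)+1) ≤ qf u} = (B n)ᶜ := by
    ext u
    simp [hB, not_lt]
  rw [hcompl, prob_compl_eq_one_sub (measurableSet_lt measurable_qf measurable_const),
    ENNReal.toReal_sub_of_le prob_le_one ENNReal.one_ne_top]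
  have : ((stdGaussianPi (M+1)) (B n)).toReal ≤ 1 - ε' :=
    ENNReal.toReal_le_of_le_ofReal (by linarith) hn.le
  simp only [ENNReal.toReal_one]
  linarith

end Aux

set_option maxHeartbeats 1600000 in
/-- Asymptotics of the smallest threshold meeting the type-I error
constraint: if the tail of `(n/2)·D(T_{X^n}‖T_{Y^n})` is uniformly `M₀·δ_n`-close to
`Q_{χ²_{k−1}}(·/η)`, then
`r_{n,ε} = inf{r > 0 : P(D(T_{X^n}‖T_{Y^n}) ≥ r) ≤ ε} = (2η/n)·Q⁻¹_{χ²_{k−1}}(ε) + O(δ_n/n)`. -/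
theorem threshold_asymptotics {m : ℕ} (hm : 1 ≤ m)
    (D : Divergence m) (η : ℝ) (hη : 0 < η) (hinv : IsInvariant D η)
    (P : Fin (m+1) → ℝ) (hP : IsPosDist P)
    (ε : ℝ) (hε : ε ∈ Set.Ioo (0:ℝ) 1)
    (M₀ : ℝ) (hM₀ : 0 < M₀) (N₀ : ℕ)
    (δ : ℕ → ℝ) (hδpos : ∀ n, 0 < δ n) (hδ0 : Filter.Tendsto δ Filter.atTop (nhds 0))
    (hbound : ∀ n ≥ N₀, ∀ c : ℝ, 0 < c →
      |(∑ x : Fin n → Fin (m+1), ∑ y : Fin n → Fin (m+1),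
          if c ≤ ((n : ℝ) / 2) * Dapp D (typeOf x) (typeOf y)
          then probSeq P x * probSeq P y else 0)
        - chiSqTail m (c / η)| ≤ M₀ * δ n) :
    ∃ C : ℝ, ∃ N : ℕ, ∀ n ≥ N,
      |sInf {r : ℝ | 0 < r ∧ alpha (Dapp D) r P n ≤ ε}
        - (2 * η / n) * chiSqTailInv m ε| ≤ C * (δ n / n) := by
  obtain ⟨M, rfl⟩ : ∃ M, m = M + 1 := ⟨m - 1, (Nat.succ_pred_eq_of_pos hm).symm⟩
  obtain ⟨hε0, hε1⟩ := hε
  have halpha : ∀ n : ℕ, N₀ ≤ n → 1 ≤ n → ∀ r : ℝ, 0 < r →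
      |alpha (Dapp D) r P n - chiSqTail (M+1) ((n:ℝ) * r / (2*η))| ≤ M₀ * δ n := by
    intro n hn hn1 r hr
    have hnpos : (0:ℝ) < n := by exact_mod_cast hn1
    have hc := hbound n hn ((n:ℝ) * r / 2) (by positivity)
    have heq : alpha (Dapp D) r P n
        = ∑ x : Fin n → Fin (M+1+1), ∑ y : Fin n → Fin (M+1+1),
            if (n:ℝ) * r / 2 ≤ ((n:ℝ)/2) * Dapp D (typeOf x) (typeOf y)
            then probSeq P x * probSeq P y else 0 := by
      unfold alpha
      refine Finset.sum_congr rfl fun x _ => Finset.sum_congr rfl fun y _ => ?_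
      have hiff : (r ≤ Dapp D (typeOf x) (typeOf y))
          ↔ ((n:ℝ) * r / 2 ≤ ((n:ℝ)/2) * Dapp D (typeOf x) (typeOf y)) := by
        constructor <;> intro h <;> nlinarith
      exact if_congr hiff rfl rfl
    rw [heq, show (n:ℝ) * r / (2*η) = ((n:ℝ)*r/2)/η by ring]
    exact hc
  set F := chiSqTail (M+1) with hF
  set T := {c : ℝ | 0 < c ∧ F c ≤ ε} with hT
  obtain ⟨c₁, hc₁pos, hc₁⟩ := exists_tail_le (M+1) hε0
  obtain ⟨c₀', hc₀'pos, hc₀'⟩ := exists_head_gt M hε1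
  have hTne : T.Nonempty := ⟨c₁, hc₁pos, hc₁⟩
  have hTbdd : BddBelow T := ⟨0, fun c hc => hc.1.le⟩
  set cs := sInf T with hcs
  have hgoalInv : chiSqTailInv (M+1) ε = cs := rfl
  have hcsub : cs ≤ c₁ := csInf_le hTbdd ⟨hc₁pos, hc₁⟩
  have hTlb : ∀ c ∈ T, c₀' ≤ c := by
    intro c hc
    by_contra hlt
    push_neg at hlt
    have h1 : F c₀' ≤ F c := chiSqTail_anti (M+1) hlt.le
    have h2 := hc.2
    linarith [hc₀']
  have hcslb : c₀' ≤ cs := le_csInf hTne hTlb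
  have hcspos : 0 < cs := lt_of_lt_of_le hc₀'pos hcslb
  have hFle : ∀ c, cs < c → F c ≤ ε := by
    intro c hc
    obtain ⟨x, hxT, hxc⟩ := exists_lt_of_csInf_lt hTne hc
    exact le_trans (chiSqTail_anti (M+1) hxc.le) hxT.2
  have hFgt : ∀ c, 0 < c → c < cs → ε < F c := by
    intro c h0 hlt
    by_contra h
    push_neg at h
    exact absurd (csInf_le hTbdd ⟨h0, h⟩) (not_le.2 hlt)
  obtain ⟨κ, hκpos, hshell⟩ := shell_real M (c₀'/2) (c₁ + 2) (by positivity)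
    (by nlinarith [hTlb c₁ ⟨hc₁pos, hc₁⟩])
  set C := 4 * η * M₀ / κ with hC
  have hθpos : 0 < κ * min (c₀'/4) 1 / M₀ := by
    have : 0 < min (c₀'/4) 1 := lt_min (by positivity) one_pos
    positivity
  have hev : ∀ᶠ n in Filter.atTop, δ n < κ * min (c₀'/4) 1 / M₀ :=
    hδ0.eventually (IsOpen.mem_nhds isOpen_Iio (by simpa using hθpos))
  obtain ⟨N₁, hN₁⟩ := Filter.eventually_atTop.1 hev
  refine ⟨C, max (max N₀ 1) N₁, ?_⟩
  intro n hn
  have hnN₀ : N₀ ≤ n := le_trans (le_trans (le_max_left _ _) (le_max_left _ _)) hn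
  have hn1 : 1 ≤ n := le_trans (le_trans (le_max_right N₀ 1) (le_max_left _ _)) hn
  have hnN₁ : N₁ ≤ n := le_trans (le_max_right _ _) hn
  have hnR : (0:ℝ) < n := by exact_mod_cast hn1
  set dn := M₀ * δ n / κ with hdn
  have hδpn := hδpos n
  have hdnpos : 0 < dn := by positivity
  have hδn := hN₁ n hnN₁
  have hdn4 : dn ≤ c₀'/4 := by
    rw [hdn, div_le_iff₀ hκpos]
    calc M₀ * δ n ≤ M₀ * (κ * min (c₀'/4) 1 / M₀) := by nlinarith
      _ = κ * min (c₀'/4) 1 := by field_simp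
      _ ≤ c₀'/4 * κ := by nlinarith [min_le_left (c₀'/4) (1:ℝ)]
  have hdn1 : dn ≤ 1 := by
    rw [hdn, div_le_iff₀ hκpos]
    calc M₀ * δ n ≤ M₀ * (κ * min (c₀'/4) 1 / M₀) := by nlinarith
      _ = κ * min (c₀'/4) 1 := by field_simp
      _ ≤ 1 * κ := by nlinarith [min_le_right (c₀'/4) (1:ℝ)]
  have hκdn : κ * dn = M₀ * δ n := by
    rw [hdn]
    field_simp
  set rup := 2*η*(cs + 2*dn)/(n:ℝ) with hrup
  have hruppos : 0 < rup := by
    rw [hrup]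
    have : 0 < cs + 2*dn := by linarith
    positivity
  have hargup : (n:ℝ) * rup / (2*η) = cs + 2*dn := by
    rw [hrup]
    field_simp
  have hFup : F (cs + 2*dn) ≤ ε - M₀ * δ n := by
    have h1 := hshell (cs + dn) dn (by linarith) hdnpos.le (by linarith)
    have h2 : F (cs + dn) ≤ ε := hFle _ (by linarith)
    rw [show cs + dn + dn = cs + 2*dn by ring] at h1
    linarith
  have hαup : alpha (Dapp D) rup P n ≤ ε := by
    have h3 := halpha n hnN₀ hn1 rup hruppos
    rw [hargup] at h3
    have h4 := (abs_le.1 h3).2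
    linarith
  have hmemup : rup ∈ {r : ℝ | 0 < r ∧ alpha (Dapp D) r P n ≤ ε} := ⟨hruppos, hαup⟩
  have hSbdd : BddBelow {r : ℝ | 0 < r ∧ alpha (Dapp D) r P n ≤ ε} :=
    ⟨0, fun r hr => hr.1.le⟩
  have hub : sInf {r : ℝ | 0 < r ∧ alpha (Dapp D) r P n ≤ ε} ≤ rup := csInf_le hSbdd hmemup
  have hlb : ∀ r ∈ {r : ℝ | 0 < r ∧ alpha (Dapp D) r P n ≤ ε},
      2*η*(cs - 2*dn)/(n:ℝ) ≤ r := by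
    rintro r ⟨hrpos, hrα⟩
    by_contra hlt
    push_neg at hlt
    have hclt : (n:ℝ) * r / (2*η) < cs - 2*dn := by
      have h0 : r * (n:ℝ) < 2*η*(cs-2*dn) := (lt_div_iff₀ hnR).1 hlt
      rw [div_lt_iff₀ (by positivity : (0:ℝ) < 2*η)]
      nlinarith
    have hcpos : 0 < (n:ℝ) * r / (2*η) := by positivity
    have h1 := hshell (cs - 2*dn) dn (by linarith) hdnpos.le (by linarith)
    rw [show cs - 2*dn + dn = cs - dn by ring] at h1
    have h2 : ε < F (cs - dn) := hFgt _ (by linarith) (by linarith)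
    have h3 : F (cs - 2*dn) ≤ F ((n:ℝ) * r / (2*η)) := chiSqTail_anti (M+1) hclt.le
    have h4 := halpha n hnN₀ hn1 r hrpos
    have h5 := (abs_le.1 h4).1
    have : ε < alpha (Dapp D) r P n := by
      have : F ((n:ℝ) * r / (2*η)) ≥ ε + M₀ * δ n := by linarith
      linarith
    linarith
  have hlb' : 2*η*(cs - 2*dn)/(n:ℝ)
      ≤ sInf {r : ℝ | 0 < r ∧ alpha (Dapp D) r P n ≤ ε} := le_csInf ⟨rup, hmemup⟩ hlb
  rw [hgoalInv, abs_le]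
  have e1 : 2*η*(cs - 2*dn)/(n:ℝ) = 2*η/(n:ℝ)*cs - 4*η*dn/(n:ℝ) := by ring
  have e2 : rup = 2*η/(n:ℝ)*cs + 4*η*dn/(n:ℝ) := by rw [hrup]; ring
  have e3 : C * (δ n / (n:ℝ)) = 4*η*dn/(n:ℝ) := by
    rw [hC, hdn]
    field_simp
  constructor <;> nlinarith [hub, hlb']

end TwoSampleTest
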